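/- The group with presentation ⟨a, b | a^4 = 1, b^4 = 1, aba = bab, [a^2, b^2] = 1⟩ has order 48, its center has order 2, and the quotient by its center is isomorphic to the symmetric group S_4. -/

import Mathlib

/-- Generator `a` of the free group on two generators. -/
def stmt9a : FreeGroup (Fin 2) := FreeGroup.of 0

/-- Generator `b` of the free group on two generators. -/
def stmt9b : FreeGroup (Fin 2) := FreeGroup.of 1

open scoped commutatorElement in
/-- The relations `a⁴, b⁴, aba(bab)⁻¹, [a²,b²]`. -/
def stmt9Rels : Set (FreeGroup (Fin 2)) :=
  { stmt9a ^ 4, stmt9b ^ 4,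
    (stmt9a * stmt9b * stmt9a) * (stmt9b * stmt9a * stmt9b)⁻¹,
    ⁅stmt9a ^ 2, stmt9b ^ 2⁆ }

set_option maxRecDepth 100000

namespace Stmt9Aux

abbrev P := PresentedGroup stmt9Rels

def gen : Fin 2 → P := fun i => PresentedGroup.of i

def evalW {M : Type*} [Monoid M] (f : Fin 2 → M) (l : List (Fin 2)) : M := (l.map f).prod

theorem evalW_cons {M : Type*} [Monoid M] (f : Fin 2 → M) (s l) :
    evalW f (s :: l) = f s * evalW f l := by simp [evalW]

theorem evalW_append {M : Type*} [Monoid M] (f : Fin 2 → M) (l1 l2) :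
    evalW f (l1 ++ l2) = evalW f l1 * evalW f l2 := by simp [evalW]

theorem evalW_snoc {M : Type*} [Monoid M] (f : Fin 2 → M) (l s) :
    evalW f (l ++ [s]) = evalW f l * f s := by simp [evalW]

theorem map_evalW {M N : Type*} [Monoid M] [Monoid N] (g : M →* N) (f : Fin 2 → M) (l) :
    g (evalW f l) = evalW (fun i => g (f i)) l := by
  simp [evalW, map_list_prod, List.map_map, Function.comp_def]

theorem rstep (x u v y : List (Fin 2)) (h : evalW gen u = evalW gen v) :
    evalW gen (x ++ (u ++ y)) = evalW gen (x ++ (v ++ y)) := by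
  rw [evalW_append, evalW_append, evalW_append, evalW_append, h]

theorem relmk {r : FreeGroup (Fin 2)} (h : r ∈ stmt9Rels) : PresentedGroup.mk stmt9Rels r = 1 :=
  (QuotientGroup.eq_one_iff r).mpr (Subgroup.subset_normalClosure h)

theorem rel_a : evalW gen [0, 0, 0, 0] = evalW gen [] := by
  have h := relmk (show stmt9a ^ 4 ∈ stmt9Rels by simp [stmt9Rels])
  rw [map_pow] at h
  simpa [evalW, gen, PresentedGroup.of, stmt9a, pow_succ, mul_assoc] using h

theorem rel_b : evalW gen [1, 1, 1, 1] = evalW gen [] := by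
  have h := relmk (show stmt9b ^ 4 ∈ stmt9Rels by simp [stmt9Rels])
  rw [map_pow] at h
  simpa [evalW, gen, PresentedGroup.of, stmt9b, pow_succ, mul_assoc] using h

theorem rel_br : evalW gen [0, 1, 0] = evalW gen [1, 0, 1] := by
  have h := relmk (show (stmt9a * stmt9b * stmt9a) * (stmt9b * stmt9a * stmt9b)⁻¹ ∈ stmt9Rels by
    simp [stmt9Rels])
  rw [map_mul, map_inv, mul_inv_eq_one] at h
  simpa [evalW, gen, PresentedGroup.of, stmt9a, stmt9b, mul_assoc] using h

open scoped commutatorElement in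
theorem rel_c : evalW gen [0, 0, 1, 1] = evalW gen [1, 1, 0, 0] := by
  have h := relmk (show ⁅stmt9a ^ 2, stmt9b ^ 2⁆ ∈ stmt9Rels by simp [stmt9Rels])
  rw [map_commutatorElement] at h
  have h2 := commutatorElement_eq_one_iff_mul_comm.mp h
  rw [map_pow, map_pow] at h2
  simpa [evalW, gen, PresentedGroup.of, stmt9a, stmt9b, pow_succ, mul_assoc] using h2

theorem D0 : evalW gen [0] = evalW gen [0] := rfl

theorem D1 : evalW gen [1] = evalW gen [1] := rfl

theorem D2 : evalW gen [0, 0] = evalW gen [0, 0] := rfl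

theorem D3 : evalW gen [0, 1] = evalW gen [0, 1] := rfl

theorem D4 : evalW gen [1, 0] = evalW gen [1, 0] := rfl

theorem D5 : evalW gen [1, 1] = evalW gen [1, 1] := rfl

theorem D6 : evalW gen [0, 0, 0] = evalW gen [0, 0, 0] := rfl

theorem D7 : evalW gen [0, 0, 1] = evalW gen [0, 0, 1] := rfl

theorem D8 : evalW gen [0, 1, 0] = evalW gen [0, 1, 0] := rfl

theorem D9 : evalW gen [0, 1, 1] = evalW gen [0, 1, 1] := rfl

theorem D10 : evalW gen [1, 0, 0] = evalW gen [1, 0, 0] := rfl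

theorem D11 : evalW gen [1, 0, 1] = evalW gen [0, 1, 0] := rstep [] [1, 0, 1] [0, 1, 0] [] rel_br.symm

theorem D12 : evalW gen [1, 1, 0] = evalW gen [1, 1, 0] := rfl

theorem D13 : evalW gen [1, 1, 1] = evalW gen [1, 1, 1] := rfl

theorem D14 : evalW gen [0, 0, 0, 0] = evalW gen [] := rstep [] [0, 0, 0, 0] [] [] rel_a

theorem D15 : evalW gen [0, 0, 0, 1] = evalW gen [0, 0, 0, 1] := rfl

theorem D16 : evalW gen [0, 0, 1, 0] = evalW gen [0, 0, 1, 0] := rfl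

theorem D17 : evalW gen [0, 0, 1, 1] = evalW gen [0, 0, 1, 1] := rfl

theorem D18 : evalW gen [0, 1, 0, 0] = evalW gen [0, 1, 0, 0] := rfl

theorem D19 : evalW gen [0, 1, 0, 1] = evalW gen [0, 0, 1, 0] := rstep [0] [1, 0, 1] [0, 1, 0] [] rel_br.symm

theorem D20 : evalW gen [0, 1, 1, 0] = evalW gen [0, 1, 1, 0] := rfl

theorem D21 : evalW gen [0, 1, 1, 1] = evalW gen [0, 1, 1, 1] := rfl

theorem D22 : evalW gen [1, 0, 0, 0] = evalW gen [1, 0, 0, 0] := rfl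

theorem D23 : evalW gen [1, 0, 0, 1] = evalW gen [1, 0, 0, 1] := rfl

theorem D24 : evalW gen [1, 1, 0, 0] = evalW gen [0, 0, 1, 1] := rstep [] [1, 1, 0, 0] [0, 0, 1, 1] [] rel_c.symm

theorem D25 : evalW gen [1, 1, 0, 1] = evalW gen [0, 1, 0, 0] := (rstep [1] [1, 0, 1] [0, 1, 0] [] rel_br.symm).trans (rstep [] [1, 0, 1] [0, 1, 0] [0] rel_br.symm)

theorem D26 : evalW gen [1, 1, 1, 0] = evalW gen [1, 1, 1, 0] := rfl

theorem D27 : evalW gen [1, 1, 1, 1] = evalW gen [] := rstep [] [1, 1, 1, 1] [] [] rel_b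

theorem D28 : evalW gen [0, 0, 0, 1, 0] = evalW gen [0, 0, 0, 1, 0] := rfl

theorem D29 : evalW gen [0, 0, 0, 1, 1] = evalW gen [0, 0, 0, 1, 1] := rfl

theorem D30 : evalW gen [0, 0, 1, 0, 0] = evalW gen [0, 0, 1, 0, 0] := rfl

theorem D31 : evalW gen [0, 0, 1, 0, 1] = evalW gen [0, 0, 0, 1, 0] := rstep [0, 0] [1, 0, 1] [0, 1, 0] [] rel_br.symm

theorem D32 : evalW gen [0, 0, 1, 1, 0] = evalW gen [0, 0, 1, 1, 0] := rfl

theorem D33 : evalW gen [0, 0, 1, 1, 1] = evalW gen [0, 0, 1, 1, 1] := rfl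

theorem D34 : evalW gen [0, 1, 0, 0, 0] = evalW gen [0, 1, 0, 0, 0] := rfl

theorem D35 : evalW gen [0, 1, 0, 0, 1] = evalW gen [0, 1, 0, 0, 1] := rfl

theorem D36 : evalW gen [0, 1, 1, 0, 0] = evalW gen [0, 0, 0, 1, 1] := rstep [0] [1, 1, 0, 0] [0, 0, 1, 1] [] rel_c.symm

theorem D37 : evalW gen [0, 1, 1, 0, 1] = evalW gen [0, 0, 1, 0, 0] := (rstep [0, 1] [1, 0, 1] [0, 1, 0] [] rel_br.symm).trans (rstep [0] [1, 0, 1] [0, 1, 0] [0] rel_br.symm)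

theorem D38 : evalW gen [0, 1, 1, 1, 0] = evalW gen [0, 1, 1, 1, 0] := rfl

theorem D39 : evalW gen [0, 1, 1, 1, 1] = evalW gen [0] := rstep [0] [1, 1, 1, 1] [] [] rel_b

theorem D40 : evalW gen [1, 0, 0, 0, 0] = evalW gen [1] := rstep [1] [0, 0, 0, 0] [] [] rel_a

theorem D41 : evalW gen [1, 0, 0, 0, 1] = evalW gen [0, 1, 1, 1, 0] := (rstep [] [] [0, 0, 0, 0] [1, 0, 0, 0, 1] rel_a.symm).trans ((rstep [0, 0, 0] [0, 1, 0] [1, 0, 1] [0, 0, 1] rel_br).trans ((rstep [0, 0, 0, 1] [0, 1, 0] [1, 0, 1] [0, 1] rel_br).trans ((rstep [0, 0, 0, 1, 1, 0] [1, 0, 1] [0, 1, 0] [] rel_br.symm).trans ((rstep [0, 0, 0] [1, 1, 0, 0] [0, 0, 1, 1] [1, 0] rel_c.symm).trans (rstep [] [0, 0, 0, 0] [] [0, 1, 1, 1, 0] rel_a)))))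

theorem D42 : evalW gen [1, 0, 0, 1, 0] = evalW gen [0, 1, 0, 0, 1] := (rstep [1, 0] [0, 1, 0] [1, 0, 1] [] rel_br).trans (rstep [] [1, 0, 1] [0, 1, 0] [0, 1] rel_br.symm)

theorem D43 : evalW gen [1, 0, 0, 1, 1] = evalW gen [1, 0, 0, 1, 1] := rfl

theorem D44 : evalW gen [1, 1, 1, 0, 0] = evalW gen [1, 0, 0, 1, 1] := rstep [1] [1, 1, 0, 0] [0, 0, 1, 1] [] rel_c.symm

theorem D45 : evalW gen [1, 1, 1, 0, 1] = evalW gen [0, 1, 0, 0, 0] := (rstep [1, 1, 1, 0, 1] [] [0, 0, 0, 0] [] rel_a.symm).trans ((rstep [1, 1, 1] [0, 1, 0] [1, 0, 1] [0, 0, 0] rel_br).trans (rstep [] [1, 1, 1, 1] [] [0, 1, 0, 0, 0] rel_b))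

theorem D46 : evalW gen [0, 0, 0, 1, 0, 0] = evalW gen [0, 0, 0, 1, 0, 0] := rfl

theorem D47 : evalW gen [0, 0, 0, 1, 0, 1] = evalW gen [1, 0] := (rstep [0, 0, 0] [1, 0, 1] [0, 1, 0] [] rel_br.symm).trans (rstep [] [0, 0, 0, 0] [] [1, 0] rel_a)

theorem D48 : evalW gen [0, 0, 0, 1, 1, 0] = evalW gen [0, 0, 0, 1, 1, 0] := rfl

theorem D49 : evalW gen [0, 0, 0, 1, 1, 1] = evalW gen [0, 0, 0, 1, 1, 1] := rfl

theorem D50 : evalW gen [0, 0, 1, 0, 0, 0] = evalW gen [0, 0, 1, 0, 0, 0] := rfl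

theorem D51 : evalW gen [0, 0, 1, 0, 0, 1] = evalW gen [0, 0, 1, 0, 0, 1] := rfl

theorem D52 : evalW gen [0, 0, 1, 1, 0, 0] = evalW gen [1, 1] := (rstep [0, 0] [1, 1, 0, 0] [0, 0, 1, 1] [] rel_c.symm).trans (rstep [] [0, 0, 0, 0] [] [1, 1] rel_a)

theorem D53 : evalW gen [0, 0, 1, 1, 0, 1] = evalW gen [0, 0, 0, 1, 0, 0] := (rstep [0, 0, 1] [1, 0, 1] [0, 1, 0] [] rel_br.symm).trans (rstep [0, 0] [1, 0, 1] [0, 1, 0] [0] rel_br.symm)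

theorem D54 : evalW gen [0, 0, 1, 1, 1, 0] = evalW gen [0, 0, 1, 1, 1, 0] := rfl

theorem D55 : evalW gen [0, 0, 1, 1, 1, 1] = evalW gen [0, 0] := rstep [0, 0] [1, 1, 1, 1] [] [] rel_b

theorem D56 : evalW gen [0, 1, 0, 0, 0, 0] = evalW gen [0, 1] := rstep [0, 1] [0, 0, 0, 0] [] [] rel_a

theorem D57 : evalW gen [0, 1, 0, 0, 0, 1] = evalW gen [0, 0, 1, 1, 1, 0] := (rstep [] [0, 1, 0] [1, 0, 1] [0, 0, 1] rel_br).trans ((rstep [1] [0, 1, 0] [1, 0, 1] [0, 1] rel_br).trans ((rstep [1, 1, 0] [1, 0, 1] [0, 1, 0] [] rel_br.symm).trans (rstep [] [1, 1, 0, 0] [0, 0, 1, 1] [1, 0] rel_c.symm)))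

theorem D58 : evalW gen [0, 1, 0, 0, 1, 0] = evalW gen [0, 0, 1, 0, 0, 1] := (rstep [0, 1, 0] [0, 1, 0] [1, 0, 1] [] rel_br).trans (rstep [0] [1, 0, 1] [0, 1, 0] [0, 1] rel_br.symm)

theorem D59 : evalW gen [0, 1, 0, 0, 1, 1] = evalW gen [0, 1, 0, 0, 1, 1] := rfl

theorem D60 : evalW gen [0, 1, 1, 1, 0, 0] = evalW gen [0, 1, 0, 0, 1, 1] := rstep [0, 1] [1, 1, 0, 0] [0, 0, 1, 1] [] rel_c.symm

theorem D61 : evalW gen [0, 1, 1, 1, 0, 1] = evalW gen [0, 0, 1, 0, 0, 0] := (rstep [0, 1, 1, 1, 0, 1] [] [0, 0, 0, 0] [] rel_a.symm).trans ((rstep [0, 1, 1, 1] [0, 1, 0] [1, 0, 1] [0, 0, 0] rel_br).trans (rstep [0] [1, 1, 1, 1] [] [0, 1, 0, 0, 0] rel_b))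

theorem D62 : evalW gen [1, 0, 0, 1, 1, 0] = evalW gen [1, 0, 0, 1, 1, 0] := rfl

theorem D63 : evalW gen [1, 0, 0, 1, 1, 1] = evalW gen [0, 0, 0, 1, 1, 0] := (rstep [] [] [0, 0, 0, 0] [1, 0, 0, 1, 1, 1] rel_a.symm).trans ((rstep [0, 0, 0] [0, 1, 0] [1, 0, 1] [0, 1, 1, 1] rel_br).trans ((rstep [0, 0, 0, 1] [0, 1, 0] [1, 0, 1] [1, 1, 1] rel_br).trans (rstep [0, 0, 0, 1, 1, 0] [1, 1, 1, 1] [] [] rel_b)))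

theorem D64 : evalW gen [0, 0, 0, 1, 0, 0, 0] = evalW gen [0, 0, 0, 1, 0, 0, 0] := rfl

theorem D65 : evalW gen [0, 0, 0, 1, 0, 0, 1] = evalW gen [0, 0, 0, 1, 0, 0, 1] := rfl

theorem D66 : evalW gen [0, 0, 0, 1, 1, 0, 0] = evalW gen [0, 1, 1] := (rstep [0, 0, 0] [1, 1, 0, 0] [0, 0, 1, 1] [] rel_c.symm).trans (rstep [] [0, 0, 0, 0] [] [0, 1, 1] rel_a)

theorem D67 : evalW gen [0, 0, 0, 1, 1, 0, 1] = evalW gen [1, 0, 0] := (rstep [0, 0, 0, 1] [1, 0, 1] [0, 1, 0] [] rel_br.symm).trans ((rstep [0, 0, 0] [1, 0, 1] [0, 1, 0] [0] rel_br.symm).trans (rstep [] [0, 0, 0, 0] [] [1, 0, 0] rel_a))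

theorem D68 : evalW gen [0, 0, 0, 1, 1, 1, 0] = evalW gen [0, 0, 0, 1, 1, 1, 0] := rfl

theorem D69 : evalW gen [0, 0, 0, 1, 1, 1, 1] = evalW gen [0, 0, 0] := rstep [0, 0, 0] [1, 1, 1, 1] [] [] rel_b

theorem D70 : evalW gen [0, 0, 1, 0, 0, 0, 0] = evalW gen [0, 0, 1] := rstep [0, 0, 1] [0, 0, 0, 0] [] [] rel_a

theorem D71 : evalW gen [0, 0, 1, 0, 0, 0, 1] = evalW gen [0, 0, 0, 1, 1, 1, 0] := (rstep [0] [0, 1, 0] [1, 0, 1] [0, 0, 1] rel_br).trans ((rstep [0, 1] [0, 1, 0] [1, 0, 1] [0, 1] rel_br).trans ((rstep [0, 1, 1, 0] [1, 0, 1] [0, 1, 0] [] rel_br.symm).trans (rstep [0] [1, 1, 0, 0] [0, 0, 1, 1] [1, 0] rel_c.symm)))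

theorem D72 : evalW gen [0, 0, 1, 0, 0, 1, 0] = evalW gen [0, 0, 0, 1, 0, 0, 1] := (rstep [0, 0, 1, 0] [0, 1, 0] [1, 0, 1] [] rel_br).trans (rstep [0, 0] [1, 0, 1] [0, 1, 0] [0, 1] rel_br.symm)

theorem D73 : evalW gen [0, 0, 1, 0, 0, 1, 1] = evalW gen [0, 0, 1, 0, 0, 1, 1] := rfl

theorem D74 : evalW gen [0, 0, 1, 1, 1, 0, 0] = evalW gen [0, 0, 1, 0, 0, 1, 1] := rstep [0, 0, 1] [1, 1, 0, 0] [0, 0, 1, 1] [] rel_c.symm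

theorem D75 : evalW gen [0, 0, 1, 1, 1, 0, 1] = evalW gen [0, 0, 0, 1, 0, 0, 0] := (rstep [0, 0, 1, 1, 1, 0, 1] [] [0, 0, 0, 0] [] rel_a.symm).trans ((rstep [0, 0, 1, 1, 1] [0, 1, 0] [1, 0, 1] [0, 0, 0] rel_br).trans (rstep [0, 0] [1, 1, 1, 1] [] [0, 1, 0, 0, 0] rel_b))

theorem D76 : evalW gen [0, 1, 0, 0, 1, 1, 0] = evalW gen [0, 1, 0, 0, 1, 1, 0] := rfl

theorem D77 : evalW gen [0, 1, 0, 0, 1, 1, 1] = evalW gen [1, 1, 0] := (rstep [] [0, 1, 0] [1, 0, 1] [0, 1, 1, 1] rel_br).trans ((rstep [1] [0, 1, 0] [1, 0, 1] [1, 1, 1] rel_br).trans (rstep [1, 1, 0] [1, 1, 1, 1] [] [] rel_b))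

theorem D78 : evalW gen [1, 0, 0, 1, 1, 0, 0] = evalW gen [1, 1, 1] := (rstep [1, 0, 0] [1, 1, 0, 0] [0, 0, 1, 1] [] rel_c.symm).trans (rstep [1] [0, 0, 0, 0] [] [1, 1] rel_a)

theorem D79 : evalW gen [1, 0, 0, 1, 1, 0, 1] = evalW gen [0, 1, 0, 0, 1, 1, 0] := (rstep [1, 0, 0, 1] [1, 0, 1] [0, 1, 0] [] rel_br.symm).trans ((rstep [1, 0] [0, 1, 0] [1, 0, 1] [1, 0] rel_br).trans (rstep [] [1, 0, 1] [0, 1, 0] [0, 1, 1, 0] rel_br.symm))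

theorem D80 : evalW gen [0, 0, 0, 1, 0, 0, 0, 0] = evalW gen [0, 0, 0, 1] := rstep [0, 0, 0, 1] [0, 0, 0, 0] [] [] rel_a

theorem D81 : evalW gen [0, 0, 0, 1, 0, 0, 0, 1] = evalW gen [1, 1, 1, 0] := (rstep [0, 0] [0, 1, 0] [1, 0, 1] [0, 0, 1] rel_br).trans ((rstep [0, 0, 1] [0, 1, 0] [1, 0, 1] [0, 1] rel_br).trans ((rstep [0, 0, 1, 1, 0] [1, 0, 1] [0, 1, 0] [] rel_br.symm).trans ((rstep [0, 0] [1, 1, 0, 0] [0, 0, 1, 1] [1, 0] rel_c.symm).trans (rstep [] [0, 0, 0, 0] [] [1, 1, 1, 0] rel_a))))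

theorem D82 : evalW gen [0, 0, 0, 1, 0, 0, 1, 0] = evalW gen [1, 0, 0, 1] := (rstep [0, 0, 0, 1, 0] [0, 1, 0] [1, 0, 1] [] rel_br).trans ((rstep [0, 0, 0] [1, 0, 1] [0, 1, 0] [0, 1] rel_br.symm).trans (rstep [] [0, 0, 0, 0] [] [1, 0, 0, 1] rel_a))

theorem D83 : evalW gen [0, 0, 0, 1, 0, 0, 1, 1] = evalW gen [0, 0, 0, 1, 0, 0, 1, 1] := rfl

theorem D84 : evalW gen [0, 0, 0, 1, 1, 1, 0, 0] = evalW gen [0, 0, 0, 1, 0, 0, 1, 1] := rstep [0, 0, 0, 1] [1, 1, 0, 0] [0, 0, 1, 1] [] rel_c.symm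

theorem D85 : evalW gen [0, 0, 0, 1, 1, 1, 0, 1] = evalW gen [1, 0, 0, 0] := (rstep [0, 0, 0, 1, 1, 1, 0, 1] [] [0, 0, 0, 0] [] rel_a.symm).trans ((rstep [0, 0, 0, 1, 1, 1] [0, 1, 0] [1, 0, 1] [0, 0, 0] rel_br).trans ((rstep [0, 0, 0] [1, 1, 1, 1] [] [0, 1, 0, 0, 0] rel_b).trans (rstep [] [0, 0, 0, 0] [] [1, 0, 0, 0] rel_a)))

theorem D86 : evalW gen [0, 0, 1, 0, 0, 1, 1, 0] = evalW gen [0, 0, 1, 0, 0, 1, 1, 0] := rfl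

theorem D87 : evalW gen [0, 0, 1, 0, 0, 1, 1, 1] = evalW gen [0, 1, 1, 0] := (rstep [0] [0, 1, 0] [1, 0, 1] [0, 1, 1, 1] rel_br).trans ((rstep [0, 1] [0, 1, 0] [1, 0, 1] [1, 1, 1] rel_br).trans (rstep [0, 1, 1, 0] [1, 1, 1, 1] [] [] rel_b))

theorem D88 : evalW gen [0, 1, 0, 0, 1, 1, 0, 0] = evalW gen [0, 1, 1, 1] := (rstep [0, 1, 0, 0] [1, 1, 0, 0] [0, 0, 1, 1] [] rel_c.symm).trans (rstep [0, 1] [0, 0, 0, 0] [] [1, 1] rel_a)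

theorem D89 : evalW gen [0, 1, 0, 0, 1, 1, 0, 1] = evalW gen [0, 0, 1, 0, 0, 1, 1, 0] := (rstep [0, 1, 0, 0, 1] [1, 0, 1] [0, 1, 0] [] rel_br.symm).trans ((rstep [0, 1, 0] [0, 1, 0] [1, 0, 1] [1, 0] rel_br).trans (rstep [0] [1, 0, 1] [0, 1, 0] [0, 1, 1, 0] rel_br.symm))

theorem D90 : evalW gen [0, 0, 0, 1, 0, 0, 1, 1, 0] = evalW gen [0, 0, 0, 1, 0, 0, 1, 1, 0] := rfl

theorem D91 : evalW gen [0, 0, 0, 1, 0, 0, 1, 1, 1] = evalW gen [0, 0, 1, 1, 0] := (rstep [0, 0] [0, 1, 0] [1, 0, 1] [0, 1, 1, 1] rel_br).trans ((rstep [0, 0, 1] [0, 1, 0] [1, 0, 1] [1, 1, 1] rel_br).trans (rstep [0, 0, 1, 1, 0] [1, 1, 1, 1] [] [] rel_b))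

theorem D92 : evalW gen [0, 0, 1, 0, 0, 1, 1, 0, 0] = evalW gen [0, 0, 1, 1, 1] := (rstep [0, 0, 1, 0, 0] [1, 1, 0, 0] [0, 0, 1, 1] [] rel_c.symm).trans (rstep [0, 0, 1] [0, 0, 0, 0] [] [1, 1] rel_a)

theorem D93 : evalW gen [0, 0, 1, 0, 0, 1, 1, 0, 1] = evalW gen [0, 0, 0, 1, 0, 0, 1, 1, 0] := (rstep [0, 0, 1, 0, 0, 1] [1, 0, 1] [0, 1, 0] [] rel_br.symm).trans ((rstep [0, 0, 1, 0] [0, 1, 0] [1, 0, 1] [1, 0] rel_br).trans (rstep [0, 0] [1, 0, 1] [0, 1, 0] [0, 1, 1, 0] rel_br.symm))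

theorem D94 : evalW gen [0, 0, 0, 1, 0, 0, 1, 1, 0, 0] = evalW gen [0, 0, 0, 1, 1, 1] := (rstep [0, 0, 0, 1, 0, 0] [1, 1, 0, 0] [0, 0, 1, 1] [] rel_c.symm).trans (rstep [0, 0, 0, 1] [0, 0, 0, 0] [] [1, 1] rel_a)

theorem D95 : evalW gen [0, 0, 0, 1, 0, 0, 1, 1, 0, 1] = evalW gen [1, 0, 0, 1, 1, 0] := (rstep [0, 0, 0, 1, 0, 0, 1] [1, 0, 1] [0, 1, 0] [] rel_br.symm).trans ((rstep [0, 0, 0, 1, 0] [0, 1, 0] [1, 0, 1] [1, 0] rel_br).trans ((rstep [0, 0, 0] [1, 0, 1] [0, 1, 0] [0, 1, 1, 0] rel_br.symm).trans (rstep [] [0, 0, 0, 0] [] [1, 0, 0, 1, 1, 0] rel_a)))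

theorem Dc0 : evalW gen [0, 0, 1, 0, 0, 1, 0] = evalW gen [0, 0, 0, 1, 0, 0, 1] := (rstep [0, 0, 1, 0] [0, 1, 0] [1, 0, 1] [] rel_br).trans (rstep [0, 0] [1, 0, 1] [0, 1, 0] [0, 1] rel_br.symm)

theorem Dc1 : evalW gen [0, 0, 1, 0, 0, 1, 1] = evalW gen [1, 0, 0, 1, 0, 0, 1] := (rstep [0] [0, 1, 0] [1, 0, 1] [0, 1, 1] rel_br).trans ((rstep [] [0, 1, 0] [1, 0, 1] [1, 0, 1, 1] rel_br).trans ((rstep [1, 0, 1] [1, 0, 1] [0, 1, 0] [1] rel_br.symm).trans (rstep [1, 0] [1, 0, 1] [0, 1, 0] [0, 1] rel_br.symm)))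

def wd : Fin 48 → List (Fin 2) := ![[], [0], [1], [0, 0], [0, 1], [1, 0], [1, 1], [0, 0, 0], [0, 0, 1], [0, 1, 0], [0, 1, 1], [1, 0, 0], [1, 1, 0], [1, 1, 1], [0, 0, 0, 1], [0, 0, 1, 0], [0, 0, 1, 1], [0, 1, 0, 0], [0, 1, 1, 0], [0, 1, 1, 1], [1, 0, 0, 0], [1, 0, 0, 1], [1, 1, 1, 0], [0, 0, 0, 1, 0], [0, 0, 0, 1, 1], [0, 0, 1, 0, 0], [0, 0, 1, 1, 0], [0, 0, 1, 1, 1], [0, 1, 0, 0, 0], [0, 1, 0, 0, 1], [0, 1, 1, 1, 0], [1, 0, 0, 1, 1], [0, 0, 0, 1, 0, 0], [0, 0, 0, 1, 1, 0], [0, 0, 0, 1, 1, 1], [0, 0, 1, 0, 0, 0], [0, 0, 1, 0, 0, 1], [0, 0, 1, 1, 1, 0], [0, 1, 0, 0, 1, 1], [1, 0, 0, 1, 1, 0], [0, 0, 0, 1, 0, 0, 0], [0, 0, 0, 1, 0, 0, 1], [0, 0, 0, 1, 1, 1, 0], [0, 0, 1, 0, 0, 1, 1], [0, 1, 0, 0,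 1, 1, 0], [0, 0, 0, 1, 0, 0, 1, 1], [0, 0, 1, 0, 0, 1, 1, 0], [0, 0, 0, 1, 0, 0, 1, 1, 0]]

theorem step0 (i : Fin 48) : ∃ j : Fin 48, evalW gen (wd i) * gen 0 = evalW gen (wd j) := by
  fin_cases i
  exacts [⟨1, (evalW_snoc gen [] 0).symm.trans D0⟩, ⟨3, (evalW_snoc gen [0] 0).symm.trans D2⟩, ⟨5, (evalW_snoc gen [1] 0).symm.trans D4⟩, ⟨7, (evalW_snoc gen [0, 0] 0).symm.trans D6⟩, ⟨9, (evalW_snoc gen [0, 1] 0).symm.trans D8⟩, ⟨11, (evalW_snoc gen [1, 0] 0).symm.trans D10⟩, ⟨12, (evalW_snoc gen [1, 1] 0).symm.trans D12⟩, ⟨0, (evalW_snoc gen [0, 0, 0] 0).symm.trans D14⟩, ⟨15, (evalW_snoc gen [0, 0, 1] 0).symm.trans D16⟩, ⟨17, (evalW_snoc gen [0, 1, 0] 0).symm.trans D18⟩, ⟨18, (evalW_snoc gen [0, 1, 1] 0).symm.trans D20⟩, ⟨20, (evalW_snoc gen [1, 0, 0] 0).symm.trans D22⟩, ⟨16, (evalW_snoc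 gen [1, 1, 0] 0).symm.trans D24⟩, ⟨22, (evalW_snoc gen [1, 1, 1] 0).symm.trans D26⟩, ⟨23, (evalW_snoc gen [0, 0, 0, 1] 0).symm.trans D28⟩, ⟨25, (evalW_snoc gen [0, 0, 1, 0] 0).symm.trans D30⟩, ⟨26, (evalW_snoc gen [0, 0, 1, 1] 0).symm.trans D32⟩, ⟨28, (evalW_snoc gen [0, 1, 0, 0] 0).symm.trans D34⟩, ⟨24, (evalW_snoc gen [0, 1, 1, 0] 0).symm.trans D36⟩, ⟨30, (evalW_snoc gen [0, 1, 1, 1] 0).symm.trans D38⟩, ⟨2, (evalW_snoc gen [1, 0, 0, 0] 0).symm.trans D40⟩, ⟨29, (evalW_snoc gen [1, 0, 0, 1] 0).symm.trans D42⟩, ⟨31, (evalW_snoc gen [1, 1, 1, 0] 0).symm.trans D44⟩, ⟨32, (evalW_snoc gen [0, 0, 0, 1, 0] 0).symm.trans D46⟩, ⟨33, (evalW_snoc gen [0, 0, 0, 1, 1] 0).symm.trans D48⟩, ⟨35, (evalW_snoc gen [0, 0, 1, 0, 0] 0).symm.trans D50⟩, ⟨6, (evalW_snoc gen [0, 0,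 1, 1, 0] 0).symm.trans D52⟩, ⟨37, (evalW_snoc gen [0, 0, 1, 1, 1] 0).symm.trans D54⟩, ⟨4, (evalW_snoc gen [0, 1, 0, 0, 0] 0).symm.trans D56⟩, ⟨36, (evalW_snoc gen [0, 1, 0, 0, 1] 0).symm.trans D58⟩, ⟨38, (evalW_snoc gen [0, 1, 1, 1, 0] 0).symm.trans D60⟩, ⟨39, (evalW_snoc gen [1, 0, 0, 1, 1] 0).symm.trans D62⟩, ⟨40, (evalW_snoc gen [0, 0, 0, 1, 0, 0] 0).symm.trans D64⟩, ⟨10, (evalW_snoc gen [0, 0, 0, 1, 1, 0] 0).symm.trans D66⟩, ⟨42, (evalW_snoc gen [0, 0, 0, 1, 1, 1] 0).symm.trans D68⟩, ⟨8, (evalW_snoc gen [0, 0, 1, 0, 0, 0] 0).symm.trans D70⟩, ⟨41, (evalW_snoc gen [0, 0, 1, 0, 0, 1] 0).symm.trans D72⟩, ⟨43, (evalW_snoc gen [0, 0, 1, 1, 1, 0] 0).symm.trans D74⟩, ⟨44, (evalW_snoc gen [0, 1, 0, 0, 1, 1] 0).symm.trans D76⟩, ⟨13, (evalW_snoc gen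 [1, 0, 0, 1, 1, 0] 0).symm.trans D78⟩, ⟨14, (evalW_snoc gen [0, 0, 0, 1, 0, 0, 0] 0).symm.trans D80⟩, ⟨21, (evalW_snoc gen [0, 0, 0, 1, 0, 0, 1] 0).symm.trans D82⟩, ⟨45, (evalW_snoc gen [0, 0, 0, 1, 1, 1, 0] 0).symm.trans D84⟩, ⟨46, (evalW_snoc gen [0, 0, 1, 0, 0, 1, 1] 0).symm.trans D86⟩, ⟨19, (evalW_snoc gen [0, 1, 0, 0, 1, 1, 0] 0).symm.trans D88⟩, ⟨47, (evalW_snoc gen [0, 0, 0, 1, 0, 0, 1, 1] 0).symm.trans D90⟩, ⟨27, (evalW_snoc gen [0, 0, 1, 0, 0, 1, 1, 0] 0).symm.trans D92⟩, ⟨34, (evalW_snoc gen [0, 0, 0, 1, 0, 0, 1, 1, 0] 0).symm.trans D94⟩]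

theorem step1 (i : Fin 48) : ∃ j : Fin 48, evalW gen (wd i) * gen 1 = evalW gen (wd j) := by
  fin_cases i
  exacts [⟨2, (evalW_snoc gen [] 1).symm.trans D1⟩, ⟨4, (evalW_snoc gen [0] 1).symm.trans D3⟩, ⟨6, (evalW_snoc gen [1] 1).symm.trans D5⟩, ⟨8, (evalW_snoc gen [0, 0] 1).symm.trans D7⟩, ⟨10, (evalW_snoc gen [0, 1] 1).symm.trans D9⟩, ⟨9, (evalW_snoc gen [1, 0] 1).symm.trans D11⟩, ⟨13, (evalW_snoc gen [1, 1] 1).symm.trans D13⟩, ⟨14, (evalW_snoc gen [0, 0, 0] 1).symm.trans D15⟩, ⟨16, (evalW_snoc gen [0, 0, 1] 1).symm.trans D17⟩, ⟨15, (evalW_snoc gen [0, 1, 0] 1).symm.trans D19⟩, ⟨19, (evalW_snoc gen [0, 1, 1] 1).symm.trans D21⟩, ⟨21, (evalW_snoc gen [1, 0, 0] 1).symm.trans D23⟩, ⟨17, (evalW_snoc gen [1, 1, 0] 1).symm.trans D25⟩, ⟨0, (evalW_snoc gen [1, 1, 1] 1).symm.trans D27⟩, ⟨24, (evalW_snoc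 gen [0, 0, 0, 1] 1).symm.trans D29⟩, ⟨23, (evalW_snoc gen [0, 0, 1, 0] 1).symm.trans D31⟩, ⟨27, (evalW_snoc gen [0, 0, 1, 1] 1).symm.trans D33⟩, ⟨29, (evalW_snoc gen [0, 1, 0, 0] 1).symm.trans D35⟩, ⟨25, (evalW_snoc gen [0, 1, 1, 0] 1).symm.trans D37⟩, ⟨1, (evalW_snoc gen [0, 1, 1, 1] 1).symm.trans D39⟩, ⟨30, (evalW_snoc gen [1, 0, 0, 0] 1).symm.trans D41⟩, ⟨31, (evalW_snoc gen [1, 0, 0, 1] 1).symm.trans D43⟩, ⟨28, (evalW_snoc gen [1, 1, 1, 0] 1).symm.trans D45⟩, ⟨5, (evalW_snoc gen [0, 0, 0, 1, 0] 1).symm.trans D47⟩, ⟨34, (evalW_snoc gen [0, 0, 0, 1, 1] 1).symm.trans D49⟩, ⟨36, (evalW_snoc gen [0, 0, 1, 0, 0] 1).symm.trans D51⟩, ⟨32, (evalW_snoc gen [0, 0, 1, 1, 0] 1).symm.trans D53⟩, ⟨3, (evalW_snoc gen [0, 0, 1, 1, 1] 1).symm.trans D55⟩, ⟨37, (evalW_snoc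 gen [0, 1, 0, 0, 0] 1).symm.trans D57⟩, ⟨38, (evalW_snoc gen [0, 1, 0, 0, 1] 1).symm.trans D59⟩, ⟨35, (evalW_snoc gen [0, 1, 1, 1, 0] 1).symm.trans D61⟩, ⟨33, (evalW_snoc gen [1, 0, 0, 1, 1] 1).symm.trans D63⟩, ⟨41, (evalW_snoc gen [0, 0, 0, 1, 0, 0] 1).symm.trans D65⟩, ⟨11, (evalW_snoc gen [0, 0, 0, 1, 1, 0] 1).symm.trans D67⟩, ⟨7, (evalW_snoc gen [0, 0, 0, 1, 1, 1] 1).symm.trans D69⟩, ⟨42, (evalW_snoc gen [0, 0, 1, 0, 0, 0] 1).symm.trans D71⟩, ⟨43, (evalW_snoc gen [0, 0, 1, 0, 0, 1] 1).symm.trans D73⟩, ⟨40, (evalW_snoc gen [0, 0, 1, 1, 1, 0] 1).symm.trans D75⟩, ⟨12, (evalW_snoc gen [0, 1, 0, 0, 1, 1] 1).symm.trans D77⟩, ⟨44, (evalW_snoc gen [1, 0, 0, 1, 1, 0] 1).symm.trans D79⟩, ⟨22, (evalW_snoc gen [0, 0, 0, 1, 0, 0, 0] 1).symm.trans D81⟩,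 ⟨45, (evalW_snoc gen [0, 0, 0, 1, 0, 0, 1] 1).symm.trans D83⟩, ⟨20, (evalW_snoc gen [0, 0, 0, 1, 1, 1, 0] 1).symm.trans D85⟩, ⟨18, (evalW_snoc gen [0, 0, 1, 0, 0, 1, 1] 1).symm.trans D87⟩, ⟨46, (evalW_snoc gen [0, 1, 0, 0, 1, 1, 0] 1).symm.trans D89⟩, ⟨26, (evalW_snoc gen [0, 0, 0, 1, 0, 0, 1, 1] 1).symm.trans D91⟩, ⟨47, (evalW_snoc gen [0, 0, 1, 0, 0, 1, 1, 0] 1).symm.trans D93⟩, ⟨39, (evalW_snoc gen [0, 0, 0, 1, 0, 0, 1, 1, 0] 1).symm.trans D95⟩]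

-- the faithful permutation representation on 16 points
def pA : Equiv.Perm (Fin 16) :=
  ⟨![0, 5, 10, 15, 4, 9, 14, 3, 8, 13, 2, 7, 12, 1, 6, 11],
   ![0, 13, 10, 7, 4, 1, 14, 11, 8, 5, 2, 15, 12, 9, 6, 3], by decide, by decide⟩

def pB : Equiv.Perm (Fin 16) :=
  ⟨![0, 1, 2, 3, 7, 4, 5, 6, 10, 11, 8, 9, 13, 14, 15, 12],
   ![0, 1, 2, 3, 5, 6, 7, 4, 10, 11, 8, 9, 15, 12, 13, 14], by decide, by decide⟩

def permf : Fin 2 → Equiv.Perm (Fin 16) := ![pA, pB]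

theorem hrels16 : ∀ r ∈ stmt9Rels, FreeGroup.lift permf r = 1 := by
  intro r hr
  simp only [stmt9Rels, Set.mem_insert_iff, Set.mem_singleton_iff] at hr
  rcases hr with rfl | rfl | rfl | rfl <;>
    · simp only [stmt9a, stmt9b, map_pow, map_mul, map_inv, map_commutatorElement,
        FreeGroup.lift_apply_of]
      decide

def phi : P →* Equiv.Perm (Fin 16) := PresentedGroup.toGroup hrels16

theorem phi_gen (i : Fin 2) : phi (gen i) = permf i := PresentedGroup.toGroup.of hrels16

theorem phi_evalW (l : List (Fin 2)) : phi (evalW gen l) = evalW permf l := by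
  rw [map_evalW]
  have h : (fun i => phi (gen i)) = permf := funext phi_gen
  rw [h]

theorem dec48 : ∀ i j : Fin 48, evalW permf (wd i) = evalW permf (wd j) → i = j := by decide

theorem inj48 : Function.Injective (fun i : Fin 48 => evalW gen (wd i)) := by
  intro i j h
  have h' : evalW gen (wd i) = evalW gen (wd j) := h
  exact dec48 i j (by rw [← phi_evalW, ← phi_evalW, h'])

theorem key (x : P) : ∀ i : Fin 48, ∃ j, evalW gen (wd i) * x = evalW gen (wd j) := by
  have hx : x ∈ Subgroup.closure (Set.range gen) := by
    rw [show Set.range gen = Set.range (PresentedGroup.of : Fin 2 → P) from rfl,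
      PresentedGroup.closure_range_of]
    exact Subgroup.mem_top x
  refine Subgroup.closure_induction
    (p := fun g _ => ∀ i : Fin 48, ∃ j, evalW gen (wd i) * g = evalW gen (wd j))
    ?_ ?_ ?_ ?_ hx
  · rintro g ⟨s, rfl⟩ i
    fin_cases s
    · exact step0 i
    · exact step1 i
  · intro i; exact ⟨i, mul_one _⟩
  · rintro g h _ _ ihg ihh i
    obtain ⟨j, hj⟩ := ihg i
    obtain ⟨k, hk⟩ := ihh j
    exact ⟨k, by rw [← mul_assoc, hj, hk]⟩
  · rintro g _ ih i
    choose σ hσ using ih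
    have hinj : Function.Injective σ := by
      intro i1 i2 h12
      have e1 := (hσ i1).trans (by rw [h12, ← hσ i2])
      exact inj48 (mul_right_cancel e1)
    obtain ⟨j, hj⟩ := Finite.injective_iff_surjective.mp hinj i
    refine ⟨j, ?_⟩
    have hji : evalW gen (wd i) = evalW gen (wd j) * g := by rw [hσ j, hj]
    rw [hji, mul_assoc, mul_inv_cancel, mul_one]

theorem cover (x : P) : ∃ i, evalW gen (wd i) = x := by
  obtain ⟨j, hj⟩ := key x 0
  refine ⟨j, ?_⟩
  rw [← hj, show evalW gen (wd 0) = 1 from rfl, one_mul]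

theorem card_P : Nat.card P = 48 := by
  have e : Fin 48 ≃ P := Equiv.ofBijective _ ⟨inj48, cover⟩
  rw [← Nat.card_congr e]
  simp

def z : P := evalW gen [0, 0, 1, 0, 0, 1]

theorem comm_a : gen 0 * z = z * gen 0 := by
  rw [show z * gen 0 = evalW gen [0, 0, 1, 0, 0, 1, 0] from
    (evalW_snoc gen [0, 0, 1, 0, 0, 1] 0).symm, Dc0, evalW_cons]
  rfl

theorem comm_b : gen 1 * z = z * gen 1 := by
  rw [show z * gen 1 = evalW gen [0, 0, 1, 0, 0, 1, 1] from
    (evalW_snoc gen [0, 0, 1, 0, 0, 1] 1).symm, Dc1, evalW_cons]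
  rfl

theorem z_center : z ∈ Subgroup.center P := by
  rw [Subgroup.mem_center_iff]
  intro g
  have hg : g ∈ Subgroup.closure (Set.range gen) := by
    rw [show Set.range gen = Set.range (PresentedGroup.of : Fin 2 → P) from rfl,
      PresentedGroup.closure_range_of]
    exact Subgroup.mem_top g
  refine Subgroup.closure_induction (p := fun g _ => g * z = z * g) ?_ ?_ ?_ ?_ hg
  · rintro g ⟨s, rfl⟩
    fin_cases s
    · exact comm_a
    · exact comm_b
  · show (1 : P) * z = z * 1
    rw [one_mul, mul_one]
  · intro a b _ _ ha hb
    rw [mul_assoc, hb, ← mul_assoc, ha, mul_assoc]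
  · intro a _ ha
    exact Commute.inv_left ha

theorem deccen : ∀ i : Fin 48,
    evalW permf (wd i) * permf 0 = permf 0 * evalW permf (wd i) →
    evalW permf (wd i) * permf 1 = permf 1 * evalW permf (wd i) → i = 0 ∨ i = 36 := by
  decide

theorem center_eq : (Subgroup.center P : Set P) = {1, z} := by
  ext x
  simp only [SetLike.mem_coe, Set.mem_insert_iff, Set.mem_singleton_iff]
  constructor
  · intro hx
    obtain ⟨i, rfl⟩ := cover x
    have ha := (Subgroup.mem_center_iff.mp hx (gen 0)).symm
    have hb := (Subgroup.mem_center_iff.mp hx (gen 1)).symm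
    have ha' : evalW permf (wd i) * permf 0 = permf 0 * evalW permf (wd i) := by
      have := congrArg phi ha
      rwa [map_mul, map_mul, phi_gen, phi_evalW] at this
    have hb' : evalW permf (wd i) * permf 1 = permf 1 * evalW permf (wd i) := by
      have := congrArg phi hb
      rwa [map_mul, map_mul, phi_gen, phi_evalW] at this
    rcases deccen i ha' hb' with rfl | rfl
    · exact Or.inl rfl
    · exact Or.inr rfl
  · rintro (rfl | rfl)
    · exact Subgroup.one_mem _
    · exact z_center

theorem one_ne_z : (1 : P) ≠ z := by
  intro h
  have h2 : (1 : Equiv.Perm (Fin 16)) = evalW permf [0, 0, 1, 0, 0, 1] := by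
    rw [← map_one phi, h, z, phi_evalW]
  exact absurd h2 (by decide)

theorem card_center : Nat.card (Subgroup.center P) = 2 := by
  have h : Nat.card (Subgroup.center P) = Nat.card ({1, z} : Set P) :=
    Nat.card_congr (Equiv.setCongr center_eq)
  rw [h, Nat.card_coe_set_eq, Set.ncard_pair one_ne_z]

-- S4 part
def sA : Equiv.Perm (Fin 4) := ⟨![1, 2, 3, 0], ![3, 0, 1, 2], by decide, by decide⟩
def sB : Equiv.Perm (Fin 4) := ⟨![2, 0, 3, 1], ![1, 3, 0, 2], by decide, by decide⟩

def s4f : Fin 2 → Equiv.Perm (Fin 4) := ![sA, sB]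

theorem hrels4 : ∀ r ∈ stmt9Rels, FreeGroup.lift s4f r = 1 := by
  intro r hr
  simp only [stmt9Rels, Set.mem_insert_iff, Set.mem_singleton_iff] at hr
  rcases hr with rfl | rfl | rfl | rfl <;>
    · simp only [stmt9a, stmt9b, map_pow, map_mul, map_inv, map_commutatorElement,
        FreeGroup.lift_apply_of]
      decide

def chi : P →* Equiv.Perm (Fin 4) := PresentedGroup.toGroup hrels4

theorem chi_gen (i : Fin 2) : chi (gen i) = s4f i := PresentedGroup.toGroup.of hrels4

theorem chi_evalW (l : List (Fin 2)) : chi (evalW gen l) = evalW s4f l := by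
  rw [map_evalW]
  have h : (fun i => chi (gen i)) = s4f := funext chi_gen
  rw [h]

theorem decker : ∀ i : Fin 48, evalW s4f (wd i) = 1 → i = 0 ∨ i = 36 := by decide

theorem decz4 : evalW s4f [0, 0, 1, 0, 0, 1] = 1 := by decide

theorem hker : chi.ker = Subgroup.center P := by
  ext x
  rw [MonoidHom.mem_ker]
  constructor
  · intro hx
    obtain ⟨i, rfl⟩ := cover x
    have hchi : evalW s4f (wd i) = 1 := by rw [← chi_evalW]; exact hx
    rcases decker i hchi with rfl | rfl
    · exact Subgroup.one_mem _
    · exact z_center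
  · intro hx
    have hx' : x ∈ ({1, z} : Set P) := by rw [← center_eq]; exact hx
    rcases hx' with rfl | rfl
    · exact map_one chi
    · rw [show z = evalW gen [0, 0, 1, 0, 0, 1] from rfl, chi_evalW]
      exact decz4

theorem decsurj : ∀ s : Equiv.Perm (Fin 4), ∃ i : Fin 48, evalW s4f (wd i) = s := by decide

theorem hsurj : Function.Surjective chi := by
  intro s
  obtain ⟨i, hi⟩ := decsurj s
  exact ⟨evalW gen (wd i), by rw [chi_evalW, hi]⟩

end Stmt9Aux

/-- The group `⟨a, b ∣ a⁴ = b⁴ = 1, aba = bab, [a²,b²] = 1⟩` has order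
48, its center has order 2, and its quotient by the center is isomorphic to `S₄`. -/
theorem stmt_9 :
    Nat.card (PresentedGroup stmt9Rels) = 48 ∧
    Nat.card (Subgroup.center (PresentedGroup stmt9Rels)) = 2 ∧
    Nonempty ((PresentedGroup stmt9Rels ⧸ Subgroup.center (PresentedGroup stmt9Rels)) ≃*
      Equiv.Perm (Fin 4)) :=
  by
  refine ⟨Stmt9Aux.card_P, Stmt9Aux.card_center,
    ⟨((QuotientGroup.quotientMulEquivOfEq Stmt9Aux.hker).symm.trans
      (QuotientGroup.quotientKerEquivOfSurjective Stmt9Aux.chi Stmt9Aux.hsurj))⟩⟩
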